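/- Let d ≥ 1, T > 0, p₀ > 1, C_V ≥ 1. Let V : ℝ^d → [0,∞) be continuously differentiable with |∇V(x)|^{p₀} ≤ C_V(1+V(x)) for all x ∈ ℝ^d and with V(x) → ∞ as |x| → ∞. Let (ρ_n)_{n∈ℕ} and ρ be integrable functions on (0,T)×ℝ^d such that: (i) for every bounded measurable ψ : (0,T)×ℝ^d → ℝ, ∫_0^T∫_{ℝ^d} ρ_n ψ dx dt → ∫_0^T∫_{ℝ^d} ρ ψ dx dt; (ii) sup_n ∫_0^T∫_{ℝ^d} |ρ_n| V dx dt < ∞ and ∫_0^T∫_{ℝ^d} |ρ| V dx dt < ∞; (iii) the functions ρ_n ∇V and ρ ∇V are integrable on (0,T)×ℝ^d. Then for every bounded measurable vector field ψ : (0,T)×ℝ^d → ℝ^d, ∫_0^T∫_{ℝ^d} ρ_n ∇V·ψ dx dt → ∫_0^T∫_{ℝ^d} ρ ∇V·ψ dx dt as n → ∞. -/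

import Mathlib

open MeasureTheory Filter

/-- Lemma C.4: if `ρ_n ⇀ ρ` weakly in `L¹((0,T)×ℝ^d)`, the potential `V ≥ 0` is `C¹`,
coercive, with `|∇V|^{p₀} ≤ C_V(1+V)`, and `∫∫ |ρ_n| V` is uniformly bounded, then
`ρ_n ∇V ⇀ ρ ∇V` weakly in `L¹((0,T)×ℝ^d)`. -/
theorem weak_convergence_of_rho_nablaV
    (d : ℕ) (hd : 1 ≤ d) (T : ℝ) (hT : 0 < T)
    (p₀ C_V : ℝ) (hp₀ : 1 < p₀) (hCV : 1 ≤ C_V)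
    (V : EuclideanSpace ℝ (Fin d) → ℝ)
    (hV : ContDiff ℝ 1 V) (hV0 : ∀ x, 0 ≤ V x)
    (hgrad : ∀ x, ‖gradient V x‖ ^ p₀ ≤ C_V * (1 + V x))
    (hcoercive : Tendsto V (Filter.cocompact (EuclideanSpace ℝ (Fin d))) atTop)
    (μ : Measure (ℝ × EuclideanSpace ℝ (Fin d)))
    (hμ : μ = (volume.restrict (Set.Ioo (0 : ℝ) T)).prod volume)
    (ρn : ℕ → ℝ × EuclideanSpace ℝ (Fin d) → ℝ)
    (ρ : ℝ × EuclideanSpace ℝ (Fin d) → ℝ)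
    (hρn_int : ∀ n, Integrable (ρn n) μ) (hρ_int : Integrable ρ μ)
    -- (i) weak L¹ convergence
    (hweak : ∀ ψ : ℝ × EuclideanSpace ℝ (Fin d) → ℝ, Measurable ψ →
      (∃ M : ℝ, ∀ z, |ψ z| ≤ M) →
      Tendsto (fun n => ∫ z, ρn n z * ψ z ∂μ) atTop (nhds (∫ z, ρ z * ψ z ∂μ)))
    -- (ii) uniform bound on ∫∫ |ρ_n| V
    (hρnV_int : ∀ n, Integrable (fun z => |ρn n z| * V z.2) μ)
    (hρnV_bdd : ∃ M : ℝ, ∀ n, ∫ z, |ρn n z| * V z.2 ∂μ ≤ M)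
    (hρV_int : Integrable (fun z => |ρ z| * V z.2) μ)
    -- (iii) integrability of ρ_n ∇V and ρ ∇V
    (hρngrad_int : ∀ n, Integrable (fun z => ρn n z • gradient V z.2) μ)
    (hρgrad_int : Integrable (fun z => ρ z • gradient V z.2) μ) :
    ∀ ψ : ℝ × EuclideanSpace ℝ (Fin d) → EuclideanSpace ℝ (Fin d), Measurable ψ →
      (∃ M : ℝ, ∀ z, ‖ψ z‖ ≤ M) →
      Tendsto (fun n => ∫ z, ρn n z * inner ℝ (gradient V z.2) (ψ z) ∂μ) atTop
        (nhds (∫ z, ρ z * inner ℝ (gradient V z.2) (ψ z) ∂μ)) := by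
  rintro ψ hψmeas ⟨Mψ₀, hMψ₀⟩
  set Mψ : ℝ := max Mψ₀ 0 with hMψdef
  have hMψ : ∀ z, ‖ψ z‖ ≤ Mψ := fun z => (hMψ₀ z).trans (le_max_left _ _)
  have hMψ0 : 0 ≤ Mψ := le_max_right _ _
  obtain ⟨M₀, hM₀⟩ := hρnV_bdd
  set M : ℝ := max (max M₀ (∫ z, |ρ z| * V z.2 ∂μ)) 0 with hMdef
  have hMn : ∀ n, ∫ z, |ρn n z| * V z.2 ∂μ ≤ M :=
    fun n => (hM₀ n).trans ((le_max_left _ _).trans (le_max_left _ _))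
  have hMρ : ∫ z, |ρ z| * V z.2 ∂μ ≤ M :=
    (le_max_right _ _).trans (le_max_left _ _)
  have hM0 : (0:ℝ) ≤ M := le_max_right _ _
  have hp₀0 : (0:ℝ) < p₀ := lt_trans one_pos hp₀
  have hCV0 : (0:ℝ) ≤ C_V := le_trans zero_le_one hCV
  have hgradcont : Continuous (fun x => gradient V x) :=
    (InnerProductSpace.toDual ℝ (EuclideanSpace ℝ (Fin d))).symm.continuous.comp (hV.continuous_fderiv one_ne_zero)
  have hVcont : Continuous V := hV.continuous
  set g : ℝ × EuclideanSpace ℝ (Fin d) → ℝ := fun z => inner ℝ (gradient V z.2) (ψ z) with hgdef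
  have hgmeas : Measurable g :=
    Measurable.inner (hgradcont.measurable.comp measurable_snd) hψmeas
  have hgbound : ∀ z, |g z| ≤ ‖gradient V z.2‖ * Mψ := by
    intro z
    refine (abs_real_inner_le_norm _ _).trans ?_
    exact mul_le_mul_of_nonneg_left (hMψ z) (norm_nonneg _)
  -- integrability of f * g given integrability of f • ∇V
  have hint : ∀ (f : ℝ × EuclideanSpace ℝ (Fin d) → ℝ), Integrable f μ →
      Integrable (fun z => f z • gradient V z.2) μ →
      Integrable (fun z => f z * g z) μ := by
    intro f hf hfg
    refine Integrable.mono (hfg.norm.const_mul Mψ)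
      (hf.aestronglyMeasurable.mul hgmeas.aestronglyMeasurable) ?_
    filter_upwards with z
    have : ‖f z * g z‖ ≤ Mψ * ‖f z • gradient V z.2‖ := by
      rw [norm_smul, Real.norm_eq_abs, Real.norm_eq_abs (f z), abs_mul]
      calc |f z| * |g z| ≤ |f z| * (‖gradient V z.2‖ * Mψ) :=
            mul_le_mul_of_nonneg_left (hgbound z) (abs_nonneg _)
        _ = Mψ * (|f z| * ‖gradient V z.2‖) := by ring
    refine this.trans ?_
    rw [Real.norm_eq_abs]
    exact le_abs_self _
  have hintn : ∀ n, Integrable (fun z => ρn n z * g z) μ :=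
    fun n => hint _ (hρn_int n) (hρngrad_int n)
  have hintρ : Integrable (fun z => ρ z * g z) μ := hint _ hρ_int hρgrad_int
  rw [Metric.tendsto_atTop]
  intro ε hε
  -- choose R
  have hexp : (0:ℝ) < 1 - p₀⁻¹ := by
    have : p₀⁻¹ < 1 := inv_lt_one_of_one_lt₀ hp₀
    linarith
  set K : ℝ := Mψ * (2 * C_V) ^ (p₀⁻¹) * M with hKdef
  have hK0 : 0 ≤ K := mul_nonneg (mul_nonneg hMψ0 (Real.rpow_nonneg (by linarith) _)) hM0
  have htend : Tendsto (fun R : ℝ => K * R ^ (p₀⁻¹ - 1)) atTop (nhds 0) := by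
    have h1 : Tendsto (fun R : ℝ => R ^ (-(1 - p₀⁻¹))) atTop (nhds 0) :=
      tendsto_rpow_neg_atTop hexp
    have h2 := h1.const_mul K
    rw [mul_zero] at h2
    convert h2 using 2 with R
    ring_nf
  have hev : ∀ᶠ R : ℝ in atTop, K * R ^ (p₀⁻¹ - 1) < ε / 4 :=
    htend.eventually_lt_const (by linarith)
  obtain ⟨R, hR1, hRK⟩ : ∃ R : ℝ, 1 ≤ R ∧ K * R ^ (p₀⁻¹ - 1) < ε / 4 := by
    obtain ⟨R, hR⟩ := (hev.and (eventually_ge_atTop (1:ℝ))).exists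
    exact ⟨R, hR.2, hR.1⟩
  have hR0 : (0:ℝ) < R := lt_of_lt_of_le one_pos hR1
  set c : ℝ := Mψ * (2 * C_V) ^ (p₀⁻¹) * R ^ (p₀⁻¹ - 1) with hcdef
  have hc0 : 0 ≤ c :=
    mul_nonneg (mul_nonneg hMψ0 (Real.rpow_nonneg (by linarith) _)) (Real.rpow_nonneg hR0.le _)
  -- key pointwise bound in the tail
  have hkey : ∀ x : EuclideanSpace ℝ (Fin d), R < V x → ‖gradient V x‖ ≤ (2 * C_V) ^ (p₀⁻¹) * (R ^ (p₀⁻¹ - 1) * V x) := by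
    intro x hx
    have hv1 : (1:ℝ) ≤ V x := hR1.trans hx.le
    have hv0 : (0:ℝ) < V x := lt_of_lt_of_le one_pos hv1
    have h1 : ‖gradient V x‖ = (‖gradient V x‖ ^ p₀) ^ p₀⁻¹ :=
      (Real.rpow_rpow_inv (norm_nonneg _) (ne_of_gt hp₀0)).symm
    have h2 : (‖gradient V x‖ ^ p₀) ^ p₀⁻¹ ≤ (C_V * (1 + V x)) ^ p₀⁻¹ :=
      Real.rpow_le_rpow (Real.rpow_nonneg (norm_nonneg _) _) (hgrad x) (by positivity)
    have h3 : C_V * (1 + V x) ≤ 2 * C_V * V x := by nlinarith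
    have h4 : (C_V * (1 + V x)) ^ p₀⁻¹ ≤ (2 * C_V * V x) ^ p₀⁻¹ :=
      Real.rpow_le_rpow (by positivity) h3 (by positivity)
    have h5 : (2 * C_V * V x) ^ p₀⁻¹ = (2 * C_V) ^ p₀⁻¹ * (V x) ^ p₀⁻¹ :=
      Real.mul_rpow (by linarith) hv0.le
    have h6 : (V x) ^ p₀⁻¹ ≤ R ^ (p₀⁻¹ - 1) * V x := by
      have e1 : (V x) ^ p₀⁻¹ = (V x) ^ (p₀⁻¹ - 1) * V x := by
        rw [← Real.rpow_add_one (ne_of_gt hv0) (p₀⁻¹ - 1)]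
        norm_num
      have e2 : (V x) ^ (p₀⁻¹ - 1) ≤ R ^ (p₀⁻¹ - 1) :=
        Real.rpow_le_rpow_of_nonpos hR0 hx.le (by linarith)
      rw [e1]
      exact mul_le_mul_of_nonneg_right e2 hv0.le
    calc ‖gradient V x‖ = (‖gradient V x‖ ^ p₀) ^ p₀⁻¹ := h1
      _ ≤ (C_V * (1 + V x)) ^ p₀⁻¹ := h2
      _ ≤ (2 * C_V * V x) ^ p₀⁻¹ := h4
      _ = (2 * C_V) ^ p₀⁻¹ * (V x) ^ p₀⁻¹ := h5
      _ ≤ (2 * C_V) ^ p₀⁻¹ * (R ^ (p₀⁻¹ - 1) * V x) :=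
          mul_le_mul_of_nonneg_left h6 (Real.rpow_nonneg (by linarith) _)
  -- the truncated set
  set A : Set (ℝ × EuclideanSpace ℝ (Fin d)) := {z | V z.2 ≤ R} with hAdef
  have hAmeas : MeasurableSet A :=
    measurableSet_le (hVcont.measurable.comp measurable_snd) measurable_const
  set ψR : ℝ × EuclideanSpace ℝ (Fin d) → ℝ := A.indicator g with hψRdef
  have hψRmeas : Measurable ψR := hgmeas.indicator hAmeas
  have hψRbdd : ∃ Mb : ℝ, ∀ z, |ψR z| ≤ Mb := by
    refine ⟨(C_V * (1 + R)) ^ p₀⁻¹ * Mψ, fun z => ?_⟩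
    by_cases hz : z ∈ A
    · rw [hψRdef, Set.indicator_of_mem hz]
      · refine (hgbound z).trans (mul_le_mul_of_nonneg_right ?_ hMψ0)
        have h1 : ‖gradient V z.2‖ = (‖gradient V z.2‖ ^ p₀) ^ p₀⁻¹ :=
          (Real.rpow_rpow_inv (norm_nonneg _) (ne_of_gt hp₀0)).symm
        rw [h1]
        refine Real.rpow_le_rpow (Real.rpow_nonneg (norm_nonneg _) _) ?_ (by positivity)
        refine (hgrad z.2).trans ?_
        have : V z.2 ≤ R := hz
        nlinarith
    · rw [hψRdef, Set.indicator_of_notMem hz, abs_zero]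
      positivity
  -- tail bound
  have htail : ∀ (f : ℝ × EuclideanSpace ℝ (Fin d) → ℝ), Integrable (fun z => f z * g z) μ →
      Integrable (fun z => |f z| * V z.2) μ →
      (∫ z, |f z| * V z.2 ∂μ ≤ M) →
      |∫ z, Aᶜ.indicator (fun z => f z * g z) z ∂μ| < ε / 4 := by
    intro f hfg hfV hfVM
    have hind : Integrable (Aᶜ.indicator (fun z => f z * g z)) μ :=
      hfg.indicator hAmeas.compl
    have hptw : ∀ z, |Aᶜ.indicator (fun z => f z * g z) z| ≤ c * (|f z| * V z.2) := by
      intro z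
      by_cases hz : z ∈ Aᶜ
      · rw [Set.indicator_of_mem hz]
        have hzR : R < V z.2 := not_le.mp hz
        rw [abs_mul]
        calc |f z| * |g z| ≤ |f z| * (‖gradient V z.2‖ * Mψ) :=
              mul_le_mul_of_nonneg_left (hgbound z) (abs_nonneg _)
          _ ≤ |f z| * ((2 * C_V) ^ (p₀⁻¹) * (R ^ (p₀⁻¹ - 1) * V z.2) * Mψ) :=
              mul_le_mul_of_nonneg_left
                (mul_le_mul_of_nonneg_right (hkey z.2 hzR) hMψ0) (abs_nonneg _)
          _ = c * (|f z| * V z.2) := by rw [hcdef]; ring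
      · rw [Set.indicator_of_notMem hz, abs_zero]
        have := hV0 z.2
        positivity
    calc |∫ z, Aᶜ.indicator (fun z => f z * g z) z ∂μ|
        ≤ ∫ z, |Aᶜ.indicator (fun z => f z * g z) z| ∂μ := by
          simpa [Real.norm_eq_abs] using
            norm_integral_le_integral_norm (Aᶜ.indicator (fun z => f z * g z))
      _ ≤ ∫ z, c * (|f z| * V z.2) ∂μ :=
          integral_mono hind.abs (hfV.const_mul c) hptw
      _ = c * ∫ z, |f z| * V z.2 ∂μ := integral_const_mul c _
      _ ≤ c * M := mul_le_mul_of_nonneg_left hfVM hc0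
      _ = K * R ^ (p₀⁻¹ - 1) := by rw [hKdef, hcdef]; ring
      _ < ε / 4 := hRK
  -- splitting of integrals
  have hsplit : ∀ (f : ℝ × EuclideanSpace ℝ (Fin d) → ℝ), Integrable (fun z => f z * g z) μ →
      ∫ z, f z * g z ∂μ =
        (∫ z, f z * ψR z ∂μ) + ∫ z, Aᶜ.indicator (fun z => f z * g z) z ∂μ := by
    intro f hfg
    have h1 : (fun z => f z * ψR z) = A.indicator (fun z => f z * g z) := by
      funext z
      rw [hψRdef, Set.indicator_mul_right]
    rw [h1, ← integral_add (hfg.indicator hAmeas) (hfg.indicator hAmeas.compl)]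
    congr 1
    funext z
    exact (Set.indicator_self_add_compl_apply A (fun z => f z * g z) z).symm
  -- apply weak convergence to ψR
  have hw := hweak ψR hψRmeas hψRbdd
  rw [Metric.tendsto_atTop] at hw
  obtain ⟨N, hN⟩ := hw (ε / 2) (by linarith)
  refine ⟨N, fun n hn => ?_⟩
  have h1 := hN n hn
  rw [Real.dist_eq] at h1 ⊢
  have e1 := hsplit (ρn n) (hintn n)
  have e2 := hsplit ρ hintρ
  have t1 := htail (ρn n) (hintn n) (hρnV_int n) (hMn n)
  have t2 := htail ρ hintρ hρV_int hMρ
  calc |(∫ z, ρn n z * g z ∂μ) - ∫ z, ρ z * g z ∂μ|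
      = |((∫ z, ρn n z * ψR z ∂μ) - ∫ z, ρ z * ψR z ∂μ)
          + ((∫ z, Aᶜ.indicator (fun z => ρn n z * g z) z ∂μ)
            - ∫ z, Aᶜ.indicator (fun z => ρ z * g z) z ∂μ)| := by
        rw [e1, e2]; ring_nf
    _ ≤ |(∫ z, ρn n z * ψR z ∂μ) - ∫ z, ρ z * ψR z ∂μ|
          + (|∫ z, Aᶜ.indicator (fun z => ρn n z * g z) z ∂μ|
            + |∫ z, Aᶜ.indicator (fun z => ρ z * g z) z ∂μ|) :=
        (abs_add_le _ _).trans (by gcongr; exact abs_sub _ _)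
    _ < ε / 2 + (ε / 4 + ε / 4) := by
        gcongr
    _ = ε := by ring
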